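/- With notation as in the covariant KSGNS construction, the KSGNS representation Φ_ρ of A on E_ρ, defined by Φ_ρ(a)(b ⊗ ξ + N_ρ) = ab ⊗ ξ + N_ρ, together with the unitary representation v of G defined by v_g(b ⊗ ξ + N_ρ) = α_g(b) ⊗ u_g ξ + N_ρ, satisfies the covariance relation Φ_ρ(α_g(a)) = v_g Φ_ρ(a) v_g* for all g ∈ G and a ∈ A. -/

import Mathlib

open Matrix

/-- The December 2024 Mathlib `CStarModule` (right Hilbert C⋆-module, `SMul Aᵐᵒᵖ E`). -/
class CStarModuleOld (A : outParam <| Type*) (E : Type*) [NonUnitalSemiring A] [StarRing A]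
    [Module ℂ A] [AddCommGroup E] [Module ℂ E] [PartialOrder A] [SMul Aᵐᵒᵖ E] [Norm A] [Norm E]
    extends Inner A E where
  inner_add_right {x} {y} {z} : inner x (y + z) = inner x y + inner x z
  inner_self_nonneg {x} : 0 ≤ inner x x
  inner_self {x} : inner x x = 0 ↔ x = 0
  inner_op_smul_right {a : A} {x y : E} : inner x (MulOpposite.op a • y) = inner x y * a
  inner_smul_right_complex {z : ℂ} {x} {y} : inner x (z • y) = z • inner x y
  star_inner x y : star (inner x y) = inner y x
  norm_eq_sqrt_norm_inner_self x : ‖x‖ = √‖inner x x‖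

/-- The KSGNS representation Φ_ρ(a)(b ⊗ ξ + N_ρ) = ab ⊗ ξ + N_ρ together with
the unitary representation v_g(b ⊗ ξ + N_ρ) = α_g(b) ⊗ u_g ξ + N_ρ satisfies the covariance
relation Φ_ρ(α_g(a)) = v_g Φ_ρ(a) v_g* (with v_g* = v_{g⁻¹}). -/
theorem stmt4
    {A : Type*} [CStarAlgebra A]
    {B : Type*} [NonUnitalCStarAlgebra B] [PartialOrder B] [StarOrderedRing B]
    {E : Type*} [NormedAddCommGroup E] [NormedSpace ℂ E] [SMul Bᵐᵒᵖ E] [CStarModuleOld B E]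
    {G : Type*} [Group G]
    (α : G → A ≃⋆ₐ[ℂ] A)
    (hα : ∀ g h : G, α (g * h) = (α h).trans (α g))
    (u : G → E →L[ℂ] E)
    (hu_one : u 1 = ContinuousLinearMap.id ℂ E)
    (hu_mul : ∀ g h : G, u (g * h) = (u g).comp (u h))
    (hu_inner : ∀ (g : G) (x y : E), inner (𝕜 := B) (u g x) (u g y) = inner (𝕜 := B) x y)
    (hu_surj : ∀ g : G, Function.Surjective (u g))
    (ρ : A →ₗ[ℂ] E →L[ℂ] E)
    (hCP : ∀ (n : ℕ) (x : Matrix (Fin n) (Fin n) A),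
      (∃ y : Matrix (Fin n) (Fin n) A, x = yᴴ * y) →
      ∀ ξ : Fin n → E, 0 ≤ ∑ i, ∑ j, inner (𝕜 := B) (ξ i) (ρ (x i j) (ξ j)))
    (hcov : ∀ (g : G) (a : A), ρ (α g a) = ((u g).comp (ρ a)).comp (u g⁻¹))
    {Eρ : Type*} [NormedAddCommGroup Eρ] [NormedSpace ℂ Eρ] [SMul Bᵐᵒᵖ Eρ]
    [CStarModuleOld B Eρ] [CompleteSpace Eρ]
    (k : A → E → Eρ)
    (hk_inner : ∀ (a b : A) (ξ η : E),
      inner (𝕜 := B) (k a ξ) (k b η) = inner (𝕜 := B) ξ (ρ (star a * b) η))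
    (hk_addl : ∀ (a a' : A) (ξ : E), k (a + a') ξ = k a ξ + k a' ξ)
    (hk_addr : ∀ (a : A) (ξ η : E), k a (ξ + η) = k a ξ + k a η)
    (hk_smull : ∀ (c : ℂ) (a : A) (ξ : E), k (c • a) ξ = c • k a ξ)
    (hk_smulr : ∀ (c : ℂ) (a : A) (ξ : E), k a (c • ξ) = c • k a ξ)
    (hk_opsmul : ∀ (a : A) (ξ : E) (b : B),
      k a (MulOpposite.op b • ξ) = MulOpposite.op b • k a ξ)
    (hk_dense : Dense (↑(Submodule.span ℂ {y : Eρ | ∃ (a : A) (ξ : E), y = k a ξ}) : Set Eρ))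
    -- v : the unitary representation of G on E_ρ induced by u and α
    (v : G → Eρ →L[ℂ] Eρ)
    (hv : ∀ (g : G) (a : A) (ξ : E), v g (k a ξ) = k (α g a) (u g ξ))
    (hv_one : v 1 = ContinuousLinearMap.id ℂ Eρ)
    (hv_mul : ∀ g h : G, v (g * h) = (v g).comp (v h))
    (hv_inner : ∀ (g : G) (x y : Eρ), inner (𝕜 := B) (v g x) (v g y) = inner (𝕜 := B) x y)
    (hv_surj : ∀ g : G, Function.Surjective (v g))
    -- Φρ : the KSGNS representation of A on E_ρ
    (Φρ : A → Eρ →L[ℂ] Eρ)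
    (hΦρ : ∀ (a b : A) (ξ : E), Φρ a (k b ξ) = k (a * b) ξ) :
    ∀ (g : G) (a : A), Φρ (α g a) = ((v g).comp (Φρ a)).comp (v g⁻¹) := by
  have hα1 : ∀ b : A, α 1 b = b := by
    intro b
    have h := hα 1 1
    rw [one_mul] at h
    exact (α 1).injective (DFunLike.congr_fun h.symm b)
  have hαinv : ∀ (g : G) (b : A), α g (α g⁻¹ b) = b := by
    intro g b
    have h := hα g g⁻¹
    rw [mul_inv_cancel] at h
    have : α g (α g⁻¹ b) = α 1 b := by rw [h]; rfl
    rw [this, hα1]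
  have huinv : ∀ (g : G) (ξ : E), u g (u g⁻¹ ξ) = ξ := by
    intro g ξ
    have h := hu_mul g g⁻¹
    rw [mul_inv_cancel, hu_one] at h
    exact DFunLike.congr_fun h.symm ξ
  intro g a
  apply ContinuousLinearMap.ext_on hk_dense
  rintro y ⟨b, ξ, rfl⟩
  simp only [ContinuousLinearMap.comp_apply, hv, hΦρ, _root_.map_mul, hαinv, huinv]
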